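/- Assume in addition that the eigenvalue E₀ of H is simple, i.e. every v ∈ ℋ with Hv = E₀v is a scalar multiple of ψ₀. Let E : ℝ → ℝ and ψ : ℝ → ℋ be functions with E(0) = E₀, ψ(0) = ψ₀, satisfying (H + λW)ψ(λ) = E(λ)·ψ(λ) for all λ ∈ [0,δ) for some δ > 0, and suppose E and ψ are twice differentiable on [0,δ) (one-sided derivatives at 0). Then the limit of ⟨P̄₀(Wψ₀), R(ε)(P̄₀(Wψ₀))⟩ as ε → 0⁺ exists and equals −(1/2)·E″(0), where E″(0) is the one-sided second derivative of E at 0; in particular this limit is a real number. -/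

import Mathlib

open Set Filter Topology

set_option maxHeartbeats 1000000 in
/-- Fermi golden rule limit: if a twice differentiable eigenvalue branch exists through a
simple eigenvalue `E₀` of `H`, then `lim_{ε→0⁺} ⟪P̄₀(Wψ₀), R(ε) P̄₀(Wψ₀)⟫ = -(1/2) E''(0)`,
where `R(ε)` is the inverse of `H - (E₀ + iε)·Id` and `P̄₀ u = u - ⟪ψ₀, u⟫ ψ₀`. -/
theorem stmt_1 {ℋ : Type*} [NormedAddCommGroup ℋ] [InnerProductSpace ℂ ℋ] [CompleteSpace ℋ]
    (H W : ℋ →L[ℂ] ℋ) (hH : IsSelfAdjoint H) (hW : IsSelfAdjoint W)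
    (E₀ : ℝ) (ψ₀ : ℋ) (hψ₀ : ‖ψ₀‖ = 1) (hEig : H ψ₀ = (E₀ : ℂ) • ψ₀)
    (hSimple : ∀ v : ℋ, H v = (E₀ : ℂ) • v → ∃ c : ℂ, v = c • ψ₀)
    (R : ℝ → (ℋ →L[ℂ] ℋ))
    (hR : ∀ ε : ℝ, 0 < ε →
      (H - ((E₀ : ℂ) + (ε : ℂ) * Complex.I) • (1 : ℋ →L[ℂ] ℋ)) * R ε = 1 ∧
      R ε * (H - ((E₀ : ℂ) + (ε : ℂ) * Complex.I) • (1 : ℋ →L[ℂ] ℋ)) = 1)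
    (δ : ℝ) (hδ : 0 < δ)
    (E : ℝ → ℝ) (ψ : ℝ → ℋ) (hE0 : E 0 = E₀) (hψ0 : ψ 0 = ψ₀)
    (hBranch : ∀ lam ∈ Ico (0:ℝ) δ, (H + (lam : ℂ) • W) (ψ lam) = (E lam : ℂ) • ψ lam)
    (E' : ℝ → ℝ) (ψ' : ℝ → ℋ)
    (hE' : ∀ lam ∈ Ico (0:ℝ) δ, HasDerivWithinAt E (E' lam) (Ico (0:ℝ) δ) lam)
    (hψ' : ∀ lam ∈ Ico (0:ℝ) δ, HasDerivWithinAt ψ (ψ' lam) (Ico (0:ℝ) δ) lam)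
    (E'' : ℝ → ℝ) (ψ'' : ℝ → ℋ)
    (hE'' : ∀ lam ∈ Ico (0:ℝ) δ, HasDerivWithinAt E' (E'' lam) (Ico (0:ℝ) δ) lam)
    (hψ'' : ∀ lam ∈ Ico (0:ℝ) δ, HasDerivWithinAt ψ' (ψ'' lam) (Ico (0:ℝ) δ) lam) :
    Tendsto (fun ε : ℝ =>
        (inner ℂ (W ψ₀ - (inner ℂ ψ₀ (W ψ₀) : ℂ) • ψ₀)
          (R ε (W ψ₀ - (inner ℂ ψ₀ (W ψ₀) : ℂ) • ψ₀)) : ℂ))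
      (𝓝[>] (0 : ℝ)) (𝓝 ((-(1/2) * E'' 0 : ℝ) : ℂ)) := by
  have hud : UniqueDiffOn ℝ (Ico (0:ℝ) δ) := uniqueDiffOn_Ico 0 δ
  have h0s : (0:ℝ) ∈ Ico (0:ℝ) δ := ⟨le_refl 0, hδ⟩
  have hsym : ∀ x y : ℋ, (inner ℂ (H x) y : ℂ) = inner ℂ x (H y) := hH.isSymmetric
  have hWsym : ∀ x y : ℋ, (inner ℂ (W x) y : ℂ) = inner ℂ x (W y) := hW.isSymmetric
  set s : Set ℝ := Ico (0:ℝ) δ with hsdef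
  set u : ℋ := ψ' 0 with hudef
  -- derivative of the real-to-complex coercion composed with a function
  have hofR : ∀ (f f' : ℝ → ℝ) (lam : ℝ), HasDerivWithinAt f (f' lam) s lam →
      HasDerivWithinAt (fun t => ((f t : ℝ) : ℂ)) ((f' lam : ℂ)) s lam := by
    intro f f' lam hf
    simpa [Function.comp_def] using (Complex.ofRealCLM.hasFDerivAt.comp_hasDerivWithinAt lam hf)
  have hid : ∀ lam : ℝ, HasDerivWithinAt (fun t : ℝ => (t : ℂ)) 1 s lam := by
    intro lam
    have h := (Complex.ofRealCLM.hasFDerivAt.comp_hasDerivWithinAt lam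
      (hasDerivWithinAt_id lam s))
    simp at h
    exact h
  have hCLM : ∀ (T : ℋ →L[ℂ] ℋ) (f : ℝ → ℋ) (f' : ℋ) (lam : ℝ),
      HasDerivWithinAt f f' s lam →
      HasDerivWithinAt (fun t => T (f t)) (T f') s lam := by
    intro T f f' lam hf
    simpa [Function.comp_def] using ((T.restrictScalars ℝ).hasFDerivAt.comp_hasDerivWithinAt lam hf)
  -- the function F and its derivative G
  set F : ℝ → ℋ := fun t : ℝ => H (ψ t) + (t : ℂ) • W (ψ t) - ((E t : ℝ) : ℂ) • ψ t with hFdef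
  set G : ℝ → ℋ := fun t : ℝ => H (ψ' t) + W (ψ t) + (t : ℂ) • W (ψ' t)
      - ((E' t : ℝ) : ℂ) • ψ t - ((E t : ℝ) : ℂ) • ψ' t with hGdef
  have hFG : ∀ lam ∈ s, HasDerivWithinAt F (G lam) s lam := by
    intro lam hlam
    have h1 : HasDerivWithinAt (fun t => H (ψ t)) (H (ψ' lam)) s lam :=
      hCLM H ψ (ψ' lam) lam (hψ' lam hlam)
    have h2 : HasDerivWithinAt (fun t : ℝ => (t : ℂ) • W (ψ t))
        ((lam : ℂ) • W (ψ' lam) + (1 : ℂ) • W (ψ lam)) s lam :=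
      (hid lam).smul (hCLM W ψ (ψ' lam) lam (hψ' lam hlam))
    have h3 : HasDerivWithinAt (fun t : ℝ => ((E t : ℝ) : ℂ) • ψ t)
        (((E lam : ℝ) : ℂ) • ψ' lam + ((E' lam : ℝ) : ℂ) • ψ lam) s lam :=
      (hofR E E' lam (hE' lam hlam)).smul (hψ' lam hlam)
    have := (h1.add h2).sub h3
    convert this using 1
    · rfl
    simp only [hGdef]
    module
  have hFzero : ∀ lam ∈ s, F lam = 0 := by
    intro lam hlam
    have h := hBranch lam hlam
    simp only [ContinuousLinearMap.add_apply, ContinuousLinearMap.coe_smul',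
      Pi.smul_apply] at h
    simp only [hFdef, h]
    abel
  have hG : ∀ lam ∈ s, G lam = 0 := by
    intro lam hlam
    have hd0 : HasDerivWithinAt F 0 s lam :=
      (hasDerivWithinAt_const lam s (0:ℋ)).congr (fun y hy => hFzero y hy) (hFzero lam hlam)
    exact ((hud lam hlam).eq_deriv s (hFG lam hlam) hd0).symm ▸ rfl
  -- first-order relation
  have rel1 : H u + W ψ₀ - ((E' 0 : ℝ) : ℂ) • ψ₀ - (E₀ : ℂ) • u = 0 := by
    have h := hG 0 h0s
    simp only [hGdef, hψ0, hE0, Complex.ofReal_zero, zero_smul, add_zero] at h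
    simpa using h
  -- second derivative of F at 0: derivative of G at 0
  have hGd : HasDerivWithinAt G
      (H (ψ'' 0) + W u + ((0:ℝ) • W (ψ'' 0) + (1:ℂ) • W u)
        - (((E' 0 : ℝ) : ℂ) • u + ((E'' 0 : ℝ) : ℂ) • ψ₀)
        - (((E 0 : ℝ) : ℂ) • ψ'' 0 + ((E' 0 : ℝ) : ℂ) • u)) s 0 := by
    have h1 : HasDerivWithinAt (fun t => H (ψ' t)) (H (ψ'' 0)) s 0 :=
      hCLM H ψ' (ψ'' 0) 0 (hψ'' 0 h0s)
    have h2 : HasDerivWithinAt (fun t => W (ψ t)) (W u) s 0 :=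
      hCLM W ψ u 0 (hψ' 0 h0s)
    have h3 : HasDerivWithinAt (fun t : ℝ => (t : ℂ) • W (ψ' t))
        (((0:ℝ) : ℂ) • W (ψ'' 0) + (1 : ℂ) • W (ψ' 0)) s 0 :=
      (hid 0).smul (hCLM W ψ' (ψ'' 0) 0 (hψ'' 0 h0s))
    have h4 : HasDerivWithinAt (fun t : ℝ => ((E' t : ℝ) : ℂ) • ψ t)
        (((E' 0 : ℝ) : ℂ) • ψ' 0 + ((E'' 0 : ℝ) : ℂ) • ψ 0) s 0 :=
      (hofR E' E'' 0 (hE'' 0 h0s)).smul (hψ' 0 h0s)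
    have h5 : HasDerivWithinAt (fun t : ℝ => ((E t : ℝ) : ℂ) • ψ' t)
        (((E 0 : ℝ) : ℂ) • ψ'' 0 + ((E' 0 : ℝ) : ℂ) • ψ' 0) s 0 :=
      (hofR E E' 0 (hE' 0 h0s)).smul (hψ'' 0 h0s)
    have := (((h1.add h2).add h3).sub h4).sub h5
    convert this using 2
    · rfl
    all_goals simp [hψ0, hudef]
  have rel2 : H (ψ'' 0) + (2:ℂ) • W u - ((E'' 0 : ℝ) : ℂ) • ψ₀
      - (2:ℂ) • (((E' 0 : ℝ) : ℂ) • u) - (E₀ : ℂ) • ψ'' 0 = 0 := by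
    have hd0 : HasDerivWithinAt G 0 s 0 :=
      (hasDerivWithinAt_const 0 s (0:ℋ)).congr (fun y hy => hG y hy) (hG 0 h0s)
    have h := (hud 0 h0s).eq_deriv s hGd hd0
    rw [hE0] at h
    rw [← h]
    module
  -- inner ℂ product facts
  have hψψ : (inner ℂ ψ₀ ψ₀ : ℂ) = 1 := by
    rw [inner_self_eq_norm_sq_to_K, hψ₀]; norm_num
  have hHψ : ∀ x : ℋ, (inner ℂ ψ₀ (H x) : ℂ) = (E₀ : ℂ) * inner ℂ ψ₀ x := by
    intro x
    rw [← hsym, hEig, inner_smul_left, Complex.conj_ofReal]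
  have h1 : (inner ℂ ψ₀ (W ψ₀) : ℂ) = ((E' 0 : ℝ) : ℂ) := by
    have h := congrArg (fun v : ℋ => (inner ℂ ψ₀ v : ℂ)) rel1
    simp only [inner_sub_right, inner_add_right, inner_smul_right, inner_zero_right] at h
    rw [hHψ, hψψ] at h
    linear_combination h
  set φ : ℋ := W ψ₀ - (inner ℂ ψ₀ (W ψ₀) : ℂ) • ψ₀ with hφdef
  have hφ : φ = W ψ₀ - ((E' 0 : ℝ) : ℂ) • ψ₀ := by rw [hφdef, h1]
  have h2 : (inner ℂ φ u : ℂ) = ((E'' 0 : ℝ) : ℂ) / 2 := by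
    have h := congrArg (fun v : ℋ => (inner ℂ ψ₀ v : ℂ)) rel2
    simp only [inner_sub_right, inner_add_right, inner_smul_right, inner_zero_right] at h
    rw [hHψ, hψψ, ← hWsym] at h
    rw [hφ, inner_sub_left, inner_smul_left, Complex.conj_ofReal]
    linear_combination h / 2
  have hAu : H u - (E₀ : ℂ) • u = -φ := by
    rw [hφ]
    linear_combination (norm := module) rel1
  have hφinner : ∀ x : ℋ, (inner ℂ φ x : ℂ) = -(inner ℂ u (H x - (E₀ : ℂ) • x) : ℂ) := by
    intro x
    have hφ2 : φ = (E₀ : ℂ) • u - H u := by linear_combination (norm := module) hAu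
    rw [hφ2, inner_sub_left, inner_smul_left, Complex.conj_ofReal, hsym,
      inner_sub_right, inner_smul_right]
    ring
  -- identity for each ε > 0
  have hkey : ∀ ε : ℝ, 0 < ε →
      (inner ℂ φ (R ε φ) : ℂ) = -((E'' 0 : ℝ) : ℂ) / 2
        + (ε : ℂ) * Complex.I * (inner ℂ u u : ℂ)
        - (ε : ℂ)^2 * inner ℂ u (R ε u) := by
    intro ε hε
    have hinv1 : ∀ x : ℋ, H (R ε x) - ((E₀ : ℂ) + (ε : ℂ) * Complex.I) • R ε x = x := by
      intro x
      have := congrArg (fun T : ℋ →L[ℂ] ℋ => T x) (hR ε hε).1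
      simpa [ContinuousLinearMap.mul_apply, ContinuousLinearMap.sub_apply,
        ContinuousLinearMap.smul_apply, ContinuousLinearMap.one_apply] using this
    have hinv2 : ∀ x : ℋ, R ε (H x - ((E₀ : ℂ) + (ε : ℂ) * Complex.I) • x) = x := by
      intro x
      have := congrArg (fun T : ℋ →L[ℂ] ℋ => T x) (hR ε hε).2
      simpa [ContinuousLinearMap.mul_apply, ContinuousLinearMap.sub_apply,
        ContinuousLinearMap.smul_apply, ContinuousLinearMap.one_apply] using this
    have hAu' : H u - ((E₀ : ℂ) + (ε : ℂ) * Complex.I) • u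
        = -φ - ((ε : ℂ) * Complex.I) • u := by
      linear_combination (norm := module) hAu
    have key1 : R ε φ = -u - ((ε : ℂ) * Complex.I) • R ε u := by
      have h := congrArg (R ε) hAu'
      rw [hinv2] at h
      simp only [map_sub, map_neg, map_smul] at h
      linear_combination (norm := module) h
    have key2 : H (R ε u) - (E₀ : ℂ) • R ε u = u + ((ε : ℂ) * Complex.I) • R ε u := by
      have h := hinv1 u
      linear_combination (norm := module) h
    rw [key1, inner_sub_right, inner_neg_right, inner_smul_right, hφinner (R ε u), key2, h2,
      inner_add_right, inner_smul_right]
    ring_nf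
    rw [Complex.I_sq]
    ring
  -- norm bound : ε * ‖R ε u‖ ≤ ‖u‖
  have hbound : ∀ ε : ℝ, 0 < ε → ε * ‖R ε u‖ ≤ ‖u‖ := by
    intro ε hε
    have hinv1 : H (R ε u) - ((E₀ : ℂ) + (ε : ℂ) * Complex.I) • R ε u = u := by
      have := congrArg (fun T : ℋ →L[ℂ] ℋ => T u) (hR ε hε).1
      simpa [ContinuousLinearMap.mul_apply, ContinuousLinearMap.sub_apply,
        ContinuousLinearMap.smul_apply, ContinuousLinearMap.one_apply] using this
    set x : ℋ := R ε u with hxdef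
    have hAapp : (H x - (E₀ : ℂ) • x) - ((ε : ℂ) * Complex.I) • x = u := by
      rw [← hinv1]
      module
    have h1 : (inner ℂ (H x) x : ℂ).im = 0 := by
      rw [← Complex.conj_eq_iff_im, inner_conj_symm]
      exact (hsym x x).symm
    have hxx : (inner ℂ x x : ℂ).im = 0 := by
      rw [inner_self_eq_norm_sq_to_K]
      norm_cast
    have him : (inner ℂ (H x - (E₀ : ℂ) • x) x : ℂ).im = 0 := by
      rw [inner_sub_left, inner_smul_left, Complex.conj_ofReal]
      rw [Complex.sub_im, Complex.mul_im, h1, hxx]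
      simp
    have hre : Complex.re (inner ℂ (H x - (E₀ : ℂ) • x) (((ε : ℂ) * Complex.I) • x) : ℂ) = 0 := by
      rw [inner_smul_right]
      have : ((ε : ℂ) * Complex.I * inner ℂ (H x - (E₀ : ℂ) • x) x).re
          = -(ε * (inner ℂ (H x - (E₀ : ℂ) • x) x : ℂ).im) := by
        simp [Complex.mul_re, Complex.mul_im]
      rw [this, him, mul_zero, neg_zero]
    have hsq : ‖u‖^2 = ‖H x - (E₀ : ℂ) • x‖^2 + (ε * ‖x‖)^2 := by
      have h := norm_sub_sq (𝕜 := ℂ) (H x - (E₀ : ℂ) • x) (((ε : ℂ) * Complex.I) • x)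
      rw [hAapp] at h
      simp only [RCLike.re_to_complex] at h
      rw [h, hre]
      have hns : ‖((ε : ℂ) * Complex.I) • x‖ = ε * ‖x‖ := by
        rw [norm_smul]
        simp [abs_of_pos hε]
      rw [hns]
      ring
    have h1' : (ε * ‖x‖)^2 ≤ ‖u‖^2 := by nlinarith [sq_nonneg (‖H x - (E₀ : ℂ) • x‖)]
    have h2' : 0 ≤ ε * ‖x‖ := by positivity
    exact (pow_le_pow_iff_left₀ h2' (norm_nonneg u) two_ne_zero).mp h1'
  -- the error term tends to zero
  have herr : Tendsto (fun ε : ℝ => (ε : ℂ) * Complex.I * (inner ℂ u u : ℂ)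
      - (ε : ℂ)^2 * inner ℂ u (R ε u)) (𝓝[>] (0:ℝ)) (𝓝 0) := by
    apply squeeze_zero_norm' (a := fun ε : ℝ => ε * ‖u‖^2 + ε * ‖u‖^2)
    · filter_upwards [self_mem_nhdsWithin] with ε hε
      have hε : (0:ℝ) < ε := hε
      have hb := hbound ε hε
      have n1 : ‖(inner ℂ u u : ℂ)‖ ≤ ‖u‖ * ‖u‖ := norm_inner_le_norm u u
      have n2 : ‖(inner ℂ u (R ε u) : ℂ)‖ ≤ ‖u‖ * ‖R ε u‖ := norm_inner_le_norm u (R ε u)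
      have e1 : ‖(ε : ℂ) * Complex.I * (inner ℂ u u : ℂ)‖ = ε * ‖(inner ℂ u u : ℂ)‖ := by
        rw [norm_mul, norm_mul, Complex.norm_I, Complex.norm_real, Real.norm_eq_abs, abs_of_pos hε]; ring
      have e2 : ‖(ε : ℂ)^2 * (inner ℂ u (R ε u) : ℂ)‖ = ε^2 * ‖(inner ℂ u (R ε u) : ℂ)‖ := by
        rw [norm_mul, norm_pow, Complex.norm_real, Real.norm_eq_abs, abs_of_pos hε]
      calc ‖(ε : ℂ) * Complex.I * (inner ℂ u u : ℂ) - (ε : ℂ)^2 * inner ℂ u (R ε u)‖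
          ≤ ‖(ε : ℂ) * Complex.I * (inner ℂ u u : ℂ)‖
            + ‖(ε : ℂ)^2 * (inner ℂ u (R ε u) : ℂ)‖ := norm_sub_le _ _
        _ ≤ ε * ‖u‖^2 + ε * ‖u‖^2 := by
            rw [e1, e2]
            have hn : 0 ≤ ‖R ε u‖ := norm_nonneg _
            nlinarith [mul_le_mul_of_nonneg_left n1 hε.le,
              mul_le_mul_of_nonneg_left n2 (mul_nonneg hε.le hε.le),
              mul_le_mul_of_nonneg_left hb (mul_nonneg hε.le (norm_nonneg u)),
              norm_nonneg (inner ℂ u (R ε u) : ℂ), norm_nonneg u]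
    · have h0 : Tendsto (fun ε : ℝ => ε * ‖u‖^2 + ε * ‖u‖^2) (𝓝 (0:ℝ)) (𝓝 0) := by
        have hc : Continuous (fun ε : ℝ => ε * ‖u‖^2 + ε * ‖u‖^2) := by continuity
        simpa using hc.tendsto 0
      exact h0.mono_left nhdsWithin_le_nhds
  -- conclude
  have hconst : Tendsto (fun _ : ℝ => (((-(1/2) * E'' 0 : ℝ)) : ℂ)) (𝓝[>] (0:ℝ))
      (𝓝 (((-(1/2) * E'' 0 : ℝ)) : ℂ)) := tendsto_const_nhds
  have hfin := hconst.add herr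
  rw [add_zero] at hfin
  apply hfin.congr'
  filter_upwards [self_mem_nhdsWithin] with ε hε
  have hε : (0:ℝ) < ε := hε
  rw [hkey ε hε]
  push_cast
  ring
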